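/- Let d ≥ 1, ρ ≥ 1, and let μ be a probability measure on ℝ^d belonging to M^d_ρ. Then there exists S > 0 such that for every multi-index j ∈ ℕ^d with j ≠ 0, the mixed absolute moment ∫ ∏_{a=1}^d |x_a|^{j_a} dμ(x) is finite and satisfies ∫ ∏_{a=1}^d |x_a|^{j_a} dμ(x) ≤ (∏_{a=1}^d j_a!) · S^{‖j‖₁} · ‖j‖₁^{−‖j‖₁/ρ}, where ‖j‖₁ = Σ_{a=1}^d j_a. In particular the characteristic function of μ belongs to the class Υ_{1/ρ, S}. -/
import Mathlib


/- STATEMENT 4: if μ is a probability measure on ℝ^d in M^d_ρ for some ρ ≥ 1, then there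
   exists S > 0 such that for every multi-index j ≠ 0 the mixed absolute moment is finite
   and ∫ ∏_a |x_a|^{j_a} dμ ≤ (∏_a j_a!) S^{‖j‖₁} ‖j‖₁^{−‖j‖₁/ρ}. -/

namespace Stmt4

open MeasureTheory

/-- Membership in M^d_ρ: the Laplace transform has exponential growth of order ρ. -/
def memM {d : ℕ} (μ : Measure (Fin d → ℝ)) (ρ : ℝ) : Prop :=
  ∃ A B : ℝ, 0 < A ∧ 0 < B ∧ ∀ lam : Fin d → ℝ,
    ∫⁻ x, ENNReal.ofReal (Real.exp (∑ a, lam a * x a)) ∂μ ≤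
      ENNReal.ofReal (A * Real.exp (B * Real.sqrt (∑ a, lam a ^ 2) ^ ρ))

theorem stmt4 (d : ℕ) (hd : 1 ≤ d) (ρ : ℝ) (hρ : 1 ≤ ρ)
    (μ : Measure (Fin d → ℝ)) [IsProbabilityMeasure μ] (hμ : memM μ ρ) :
    ∃ S : ℝ, 0 < S ∧ ∀ j : Fin d → ℕ, j ≠ 0 →
      Integrable (fun x => ∏ a, |x a| ^ j a) μ ∧
      (∫ x, ∏ a, |x a| ^ j a ∂μ) ≤
        ((∏ a, Nat.factorial (j a) : ℕ) : ℝ) * S ^ (∑ a, j a) *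
          ((∑ a, j a : ℕ) : ℝ) ^ (-(((∑ a, j a : ℕ) : ℝ) / ρ)) := by
  obtain ⟨A, B, hA, hB, hbound⟩ := hμ
  have hρ0 : (0:ℝ) < ρ := by linarith
  set D : ℝ := Real.sqrt d ^ ρ with hD
  have hD0 : 0 ≤ D := Real.rpow_nonneg (Real.sqrt_nonneg _) _
  set M : ℝ := max (2 ^ d * A) 1 with hM
  have hM1 : (1:ℝ) ≤ M := le_max_right _ _
  refine ⟨M * Real.exp (B * D), by positivity, ?_⟩
  intro j hj
  set n : ℕ := ∑ a, j a with hn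
  have hn0 : n ≠ 0 := by
    intro h
    apply hj
    funext a
    have h2 : ∀ b ∈ Finset.univ, j b = 0 := Finset.sum_eq_zero_iff.mp (by rw [← hn]; exact h)
    exact h2 a (Finset.mem_univ a)
  have hnR : (0:ℝ) < n := by positivity
  set t : ℝ := (n:ℝ) ^ ((1:ℝ)/ρ) with ht
  have ht0 : 0 < t := Real.rpow_pos_of_pos hnR _
  have htρ : t ^ ρ = (n:ℝ) := by
    rw [ht, ← Real.rpow_mul hnR.le, one_div, inv_mul_cancel₀ hρ0.ne', Real.rpow_one]
  have htn : t ^ n = (n:ℝ) ^ ((n:ℝ)/ρ) := by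
    rw [ht, ← Real.rpow_natCast ((n:ℝ) ^ ((1:ℝ)/ρ)) n, ← Real.rpow_mul hnR.le]
    congr 1; ring
  -- sign vectors
  set lam : Finset (Fin d) → (Fin d) → ℝ := fun T a => if a ∈ T then t else -t with hlam
  have hmeasE : ∀ T : Finset (Fin d),
      AEStronglyMeasurable (fun x : Fin d → ℝ => Real.exp (∑ a, lam T a * x a)) μ := by
    intro T
    exact (Real.continuous_exp.comp (continuous_finset_sum _ fun a _ =>
      continuous_const.mul (continuous_apply a))).aestronglyMeasurable
  have hIntE : ∀ T : Finset (Fin d),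
      Integrable (fun x : Fin d → ℝ => Real.exp (∑ a, lam T a * x a)) μ := by
    intro T
    refine ⟨hmeasE T, ?_⟩
    rw [hasFiniteIntegral_iff_ofReal (ae_of_all _ fun x => (Real.exp_pos _).le)]
    exact lt_of_le_of_lt (hbound (lam T)) ENNReal.ofReal_lt_top
  have hexpT : ∀ T : Finset (Fin d),
      B * Real.sqrt (∑ a, lam T a ^ 2) ^ ρ = B * D * n := by
    intro T
    have h1 : ∑ a, lam T a ^ 2 = (d:ℝ) * t ^ 2 := by
      rw [Finset.sum_congr rfl (fun a _ => show lam T a ^ 2 = t ^ 2 by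
        by_cases h : a ∈ T <;> simp [hlam, h])]
      simp [Finset.sum_const, Finset.card_univ, mul_comm]
    rw [h1, show Real.sqrt ((d:ℝ) * t ^ 2) = Real.sqrt d * t by
        rw [Real.sqrt_mul (by positivity), Real.sqrt_sq ht0.le],
      Real.mul_rpow (Real.sqrt_nonneg _) ht0.le, htρ]
    ring
  have hEle : ∀ T : Finset (Fin d),
      (∫ x, Real.exp (∑ a, lam T a * x a) ∂μ) ≤ A * Real.exp (B * D * n) := by
    intro T
    rw [integral_eq_lintegral_of_nonneg_ae (ae_of_all _ fun x => (Real.exp_pos _).le) (hmeasE T)]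
    calc (∫⁻ x, ENNReal.ofReal (Real.exp (∑ a, lam T a * x a)) ∂μ).toReal
        ≤ (ENNReal.ofReal (A * Real.exp (B * Real.sqrt (∑ a, lam T a ^ 2) ^ ρ))).toReal :=
          ENNReal.toReal_mono ENNReal.ofReal_ne_top (hbound (lam T))
      _ ≤ A * Real.exp (B * Real.sqrt (∑ a, lam T a ^ 2) ^ ρ) :=
          le_of_eq (ENNReal.toReal_ofReal (by positivity))
      _ = A * Real.exp (B * D * n) := by rw [hexpT T]
  -- dominating function
  set g : (Fin d → ℝ) → ℝ := fun x => ∑ T : Finset (Fin d), Real.exp (∑ a, lam T a * x a)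
    with hg
  have hgInt : Integrable g μ := integrable_finset_sum _ fun T _ => hIntE T
  set F : ℝ := ((∏ a, Nat.factorial (j a) : ℕ) : ℝ) with hF
  have hF0 : 0 < F := by positivity
  -- pointwise bound
  have hpt : ∀ x : Fin d → ℝ, ∏ a, |x a| ^ j a ≤ F / t ^ n * g x := by
    intro x
    have h2 : ∏ a, (t * |x a|) ^ j a ≤ ∏ a, ((Nat.factorial (j a) : ℝ) * Real.exp (t * |x a|)) := by
      refine Finset.prod_le_prod (fun a _ => by positivity) (fun a _ => ?_)
      have := Real.pow_div_factorial_le_exp (x := t * |x a|) (by positivity) (j a)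
      rw [div_le_iff₀ (by positivity)] at this
      linarith
    have hL : ∏ a, (t * |x a|) ^ j a = t ^ n * ∏ a, |x a| ^ j a := by
      simp only [mul_pow, Finset.prod_mul_distrib, Finset.prod_pow_eq_pow_sum, hn]
    have hR : ∏ a, ((Nat.factorial (j a) : ℝ) * Real.exp (t * |x a|))
        = F * ∏ a, Real.exp (t * |x a|) := by
      rw [Finset.prod_mul_distrib, hF, Nat.cast_prod]
    have h3 : ∏ a, Real.exp (t * |x a|) ≤ g x := by
      calc ∏ a, Real.exp (t * |x a|)
          ≤ ∏ a, (Real.exp (t * x a) + Real.exp (-t * x a)) := by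
            refine Finset.prod_le_prod (fun a _ => (Real.exp_pos _).le) (fun a _ => ?_)
            rcases abs_cases (x a) with ⟨h, _⟩ | ⟨h, _⟩
            · rw [h]; linarith [Real.exp_pos (-t * x a)]
            · rw [h, show t * -x a = -t * x a from by ring]
              linarith [Real.exp_pos (t * x a)]
        _ = ∑ T ∈ (Finset.univ : Finset (Fin d)).powerset,
              (∏ a ∈ T, Real.exp (t * x a)) * ∏ a ∈ Finset.univ \ T, Real.exp (-t * x a) :=
            Finset.prod_add _ _ _
        _ = g x := by
            rw [Finset.powerset_univ]
            refine Finset.sum_congr rfl fun T _ => ?_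
            rw [← Real.exp_sum, ← Real.exp_sum, ← Real.exp_add]
            congr 1
            have h1 : ∑ a : Fin d, lam T a * x a
                = ∑ a ∈ T ∪ Finset.univ \ T, lam T a * x a := by
              rw [Finset.union_sdiff_of_subset (Finset.subset_univ T)]
            rw [h1, Finset.sum_union Finset.sdiff_disjoint.symm]
            congr 1
            · exact Finset.sum_congr rfl fun a ha => by simp [hlam, ha]
            · exact Finset.sum_congr rfl fun a ha => by
                simp [hlam, (Finset.mem_sdiff.mp ha).2]
    have h4 : t ^ n * ∏ a, |x a| ^ j a ≤ F * g x := by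
      calc t ^ n * ∏ a, |x a| ^ j a = ∏ a, (t * |x a|) ^ j a := hL.symm
        _ ≤ ∏ a, ((Nat.factorial (j a) : ℝ) * Real.exp (t * |x a|)) := h2
        _ = F * ∏ a, Real.exp (t * |x a|) := hR
        _ ≤ F * g x := by
            exact mul_le_mul_of_nonneg_left h3 hF0.le
    rw [div_mul_eq_mul_div, le_div_iff₀ (pow_pos ht0 n)]
    calc (∏ a, |x a| ^ j a) * t ^ n = t ^ n * ∏ a, |x a| ^ j a := by ring
      _ ≤ F * g x := h4
  have hPmeas : AEStronglyMeasurable (fun x : Fin d → ℝ => ∏ a, |x a| ^ j a) μ := by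
    exact (continuous_finset_prod _ fun a _ =>
      ((continuous_apply a).abs.pow _)).aestronglyMeasurable
  have hPint : Integrable (fun x : Fin d → ℝ => ∏ a, |x a| ^ j a) μ := by
    refine Integrable.mono' (hgInt.const_mul (F / t ^ n)) hPmeas (ae_of_all _ fun x => ?_)
    rw [Real.norm_eq_abs, abs_of_nonneg (by positivity)]
    exact hpt x
  refine ⟨hPint, ?_⟩
  have hIle : (∫ x, ∏ a, |x a| ^ j a ∂μ) ≤ F / t ^ n * (2 ^ d * (A * Real.exp (B * D * n))) := by
    calc (∫ x, ∏ a, |x a| ^ j a ∂μ) ≤ ∫ x, F / t ^ n * g x ∂μ :=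
        integral_mono hPint (hgInt.const_mul _) hpt
      _ = F / t ^ n * ∫ x, g x ∂μ := integral_const_mul _ _
      _ = F / t ^ n * ∑ T : Finset (Fin d), ∫ x, Real.exp (∑ a, lam T a * x a) ∂μ := by
          rw [hg, integral_finset_sum _ fun T _ => hIntE T]
      _ ≤ F / t ^ n * (2 ^ d * (A * Real.exp (B * D * n))) := by
          refine mul_le_mul_of_nonneg_left ?_ (by positivity)
          calc ∑ T : Finset (Fin d), ∫ x, Real.exp (∑ a, lam T a * x a) ∂μ
              ≤ ∑ _T : Finset (Fin d), A * Real.exp (B * D * n) :=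
                Finset.sum_le_sum fun T _ => hEle T
            _ = 2 ^ d * (A * Real.exp (B * D * n)) := by
                rw [Finset.sum_const, Finset.card_univ, Fintype.card_finset, Fintype.card_fin,
                  nsmul_eq_mul]
                push_cast
                ring
  refine hIle.trans ?_
  -- final arithmetic
  have hrpow : ((n:ℝ)) ^ (-(((n:ℕ):ℝ) / ρ)) = 1 / t ^ n := by
    rw [Real.rpow_neg hnR.le, htn, one_div]
  rw [hrpow]
  have hSn : (M * Real.exp (B * D)) ^ n = M ^ n * Real.exp (B * D * n) := by
    rw [mul_pow, ← Real.exp_nat_mul]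
    ring_nf
  rw [hSn]
  have h2dA : 2 ^ d * A ≤ M ^ n := (le_max_left _ _).trans (le_self_pow₀ hM1 hn0)
  calc F / t ^ n * (2 ^ d * (A * Real.exp (B * D * n)))
      = F * (2 ^ d * A) * Real.exp (B * D * n) * (1 / t ^ n) := by ring
    _ ≤ F * M ^ n * Real.exp (B * D * n) * (1 / t ^ n) := by
        gcongr
    _ = F * (M ^ n * Real.exp (B * D * n)) * (1 / t ^ n) := by ring

end Stmt4
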